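/- For integers l ≥ 1 and 0 ≤ m ≤ l, let Q(t) = (1-t²)^{m/2} · d^{m+l}/dt^{m+l}[(1-t²)^l] on [-1,1]. Then the ratio (∫_{-1}^{1} t² Q(t)² dt) / (∫_{-1}^{1} Q(t)² dt) equals (2l² - 2m² + 2l - 1) / ((2l+3)(2l-1)). -/

import Mathlib

open Polynomial intervalIntegral

lemma iteratedDeriv_polyeval (p : Polynomial ℝ) (n : ℕ) :
    iteratedDeriv n (fun s : ℝ => p.eval s) = fun s => (derivative^[n] p).eval s := by
  induction n with
  | zero => simp
  | succ n ih =>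
    rw [iteratedDeriv_succ, ih, Function.iterate_succ_apply']
    funext s
    exact Polynomial.deriv _

lemma u_expand (l : ℕ) : ((1 - X ^ 2 : Polynomial ℝ)) ^ l
    = ∑ i ∈ Finset.range (l + 1), C ((-1 : ℝ) ^ i * (l.choose i)) * X ^ (2 * i) := by
  rw [sub_eq_add_neg, add_comm, add_pow]
  refine Finset.sum_congr rfl fun i hi => ?_
  rw [one_pow, mul_one, neg_pow, ← pow_mul]
  push_cast
  ring_nf
  simp [mul_comm, mul_assoc, mul_left_comm, C_eq_natCast]

lemma u_coeff (l n : ℕ) : ((1 - X ^ 2 : Polynomial ℝ) ^ l).coeff n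
    = if n % 2 = 0 ∧ n ≤ 2 * l then (-1 : ℝ) ^ (n / 2) * (l.choose (n / 2)) else 0 := by
  rw [u_expand, finset_sum_coeff]
  simp only [coeff_C_mul, coeff_X_pow]
  by_cases h : n % 2 = 0 ∧ n ≤ 2 * l
  · rw [if_pos h]
    obtain ⟨h1, h2⟩ := h
    rw [Finset.sum_eq_single_of_mem (n / 2)]
    · rw [if_pos (by omega), mul_one]
    · simp; omega
    · intro b _ hb
      rw [if_neg (by omega), mul_zero]
  · rw [if_neg h]
    apply Finset.sum_eq_zero
    intro i hi
    simp only [Finset.mem_range] at hi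
    rw [if_neg (by omega), mul_zero]

lemma u_natDegree (l : ℕ) : ((1 - X ^ 2 : Polynomial ℝ) ^ l).natDegree ≤ 2 * l := by
  refine natDegree_le_iff_coeff_eq_zero.mpr fun n hn => ?_
  rw [u_coeff, if_neg (by omega)]

lemma deriv_fac {r : ℕ} (h : Polynomial ℝ) : ∀ j ≤ r, ∃ g : Polynomial ℝ,
    derivative^[j] ((1 - X ^ 2) ^ r * h) = (1 - X ^ 2) ^ (r - j) * g := by
  intro j
  induction j with
  | zero => exact fun _ => ⟨h, by simp⟩
  | succ j ih =>
    intro hj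
    obtain ⟨g, hg⟩ := ih (by omega)
    obtain ⟨s, hs⟩ : ∃ s, r - j = s + 1 := ⟨r - j - 1, by omega⟩
    refine ⟨(1 - X ^ 2) * derivative g + ((s : ℝ[X]) + 1) * derivative (1 - X ^ 2) * g, ?_⟩
    rw [Function.iterate_succ_apply', hg, hs]
    rw [derivative_mul, derivative_pow]
    have : r - (j + 1) = s := by omega
    rw [this]
    simp only [map_add, map_one, map_natCast]
    push_cast
    ring

lemma eval_deriv_zero {r j : ℕ} (h : Polynomial ℝ) (hj : j < r) {t : ℝ} (ht : 1 - t ^ 2 = 0) :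
    (derivative^[j] ((1 - X ^ 2) ^ r * h)).eval t = 0 := by
  obtain ⟨g, hg⟩ := deriv_fac h j hj.le
  obtain ⟨s, hs⟩ : ∃ s, r - j = s + 1 := ⟨r - j - 1, by omega⟩
  rw [hg, hs]
  simp [ht]

lemma polyIntegrable (p : Polynomial ℝ) (a b : ℝ) :
    IntervalIntegrable (fun t => p.eval t) MeasureTheory.volume a b :=
  (p.continuous_aeval).intervalIntegrable a b

lemma ibp1 (f g : Polynomial ℝ) :
    ∫ t in (-1:ℝ)..1, (derivative f).eval t * g.eval t
    = (f.eval 1 * g.eval 1 - f.eval (-1) * g.eval (-1))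
      - ∫ t in (-1:ℝ)..1, f.eval t * (derivative g).eval t := by
  have h := intervalIntegral.integral_deriv_mul_eq_sub
    (a := (-1:ℝ)) (b := (1:ℝ)) (u := fun t => f.eval t) (v := fun t => g.eval t)
    (u' := fun t => (derivative f).eval t) (v' := fun t => (derivative g).eval t)
    (fun x _ => f.hasDerivAt x) (fun x _ => g.hasDerivAt x)
    (polyIntegrable _ _ _) (polyIntegrable _ _ _)
  have hsplit : ∫ t in (-1:ℝ)..1, ((derivative f).eval t * g.eval t + f.eval t * (derivative g).eval t)
      = (∫ t in (-1:ℝ)..1, (derivative f).eval t * g.eval t)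
        + ∫ t in (-1:ℝ)..1, f.eval t * (derivative g).eval t := by
    apply intervalIntegral.integral_add
    · exact ((derivative f).continuous_aeval.mul g.continuous_aeval).intervalIntegrable _ _
    · exact (f.continuous_aeval.mul (derivative g).continuous_aeval).intervalIntegrable _ _
  rw [hsplit] at h
  linarith

lemma ibp_iter (k : ℕ) (f g : Polynomial ℝ)
    (hb : ∀ j < k, ∀ t : ℝ, 1 - t ^ 2 = 0 →
      (derivative^[k - 1 - j] f).eval t * (derivative^[j] g).eval t = 0) :
    ∫ t in (-1:ℝ)..1, (derivative^[k] f).eval t * g.eval t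
    = (-1 : ℝ) ^ k * ∫ t in (-1:ℝ)..1, f.eval t * (derivative^[k] g).eval t := by
  induction k generalizing f with
  | zero => simp
  | succ k ih =>
    have h1 : ∫ t in (-1:ℝ)..1, (derivative^[k + 1] f).eval t * g.eval t
        = (-1 : ℝ) ^ k * ∫ t in (-1:ℝ)..1, (derivative f).eval t * (derivative^[k] g).eval t := by
      rw [Function.iterate_succ_apply]
      apply ih
      intro j hj t ht
      have : derivative^[k - 1 - j] (derivative f) = derivative^[k - j] f := by
        rw [← Function.iterate_succ_apply]
        congr 1
        omega
      rw [this]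
      have h2 := hb j (by omega) t ht
      have : k + 1 - 1 - j = k - j := by omega
      rwa [this] at h2
    rw [h1]
    have h3 : (derivative^[k + 1] g) = derivative (derivative^[k] g) :=
      Function.iterate_succ_apply' _ _ _
    have h4 := ibp1 f (derivative^[k] g)
    have e1 : f.eval 1 * (derivative^[k] g).eval 1 = 0 := by
      have := hb k (by omega) 1 (by norm_num)
      simpa using this
    have e2 : f.eval (-1) * (derivative^[k] g).eval (-1) = 0 := by
      have := hb k (by omega) (-1) (by norm_num)
      simpa using this
    rw [e1, e2] at h4
    rw [h4, h3]
    ring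

noncomputable def J0 (l : ℕ) : ℝ := ∫ t in (-1:ℝ)..1, (1 - t ^ 2) ^ l
noncomputable def J1 (l : ℕ) : ℝ := ∫ t in (-1:ℝ)..1, t * (1 - t ^ 2) ^ l
noncomputable def J2 (l : ℕ) : ℝ := ∫ t in (-1:ℝ)..1, t ^ 2 * (1 - t ^ 2) ^ l

lemma contJ0 (l : ℕ) : Continuous fun t : ℝ => (1 - t ^ 2) ^ l :=
  (continuous_const.sub (continuous_pow 2)).pow l

lemma J0_pos (l : ℕ) : 0 < J0 l := by
  apply intervalIntegral.intervalIntegral_pos_of_pos_on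
  · exact (contJ0 l).intervalIntegrable _ _
  · intro x hx
    simp only [Set.mem_Ioo] at hx
    have : 0 < 1 - x ^ 2 := by nlinarith [hx.1, hx.2]
    positivity
  · norm_num

lemma J1_zero (l : ℕ) : J1 l = 0 := by
  have hodd : ∀ x : ℝ, (-x) * (1 - (-x) ^ 2) ^ l = -(x * (1 - x ^ 2) ^ l) := by
    intro x
    have hx : (-x : ℝ) ^ 2 = x ^ 2 := by ring
    rw [hx]; ring
  have key : ∫ x in (0:ℝ)..1, (-x) * (1 - (-x) ^ 2) ^ l
      = ∫ x in (-1:ℝ)..(0:ℝ), x * (1 - x ^ 2) ^ l := by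
    have := intervalIntegral.integral_comp_neg (a := (0:ℝ)) (b := (1:ℝ))
      (f := fun t : ℝ => t * (1 - t ^ 2) ^ l)
    simpa using this
  have key2 : ∫ x in (0:ℝ)..1, (-x) * (1 - (-x) ^ 2) ^ l
      = - ∫ x in (0:ℝ)..1, x * (1 - x ^ 2) ^ l := by
    rw [← intervalIntegral.integral_neg]
    congr 1
    funext x
    exact hodd x
  have h2 := intervalIntegral.integral_add_adjacent_intervals
    (μ := MeasureTheory.volume) (a := (-1:ℝ)) (b := (0:ℝ)) (c := (1:ℝ))
    (f := fun t : ℝ => t * (1 - t ^ 2) ^ l)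
    ((continuous_id.mul (contJ0 l)).intervalIntegrable _ _)
    ((continuous_id.mul (contJ0 l)).intervalIntegrable _ _)
  unfold J1
  rw [← h2, ← key, key2]
  ring

lemma J2_eq (l : ℕ) : J2 l = J0 l / (2 * l + 3) := by
  have hd : ∀ t : ℝ, HasDerivAt (fun t : ℝ => t * (1 - t ^ 2) ^ (l + 1))
      ((1 - t ^ 2) ^ l - (2 * l + 3) * (t ^ 2 * (1 - t ^ 2) ^ l)) t := by
    intro t
    have h1 : HasDerivAt (fun t : ℝ => t * (1 - t ^ 2) ^ (l + 1))
        (1 * (1 - t ^ 2) ^ (l + 1) + t * ((l + 1 : ℕ) * (1 - t ^ 2) ^ l * (0 - 2 * t))) t := by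
      apply HasDerivAt.mul (hasDerivAt_id t)
      have := ((hasDerivAt_const t (1:ℝ)).fun_sub ((hasDerivAt_pow 2 t))).fun_pow (l + 1)
      convert this using 1
      push_cast
      ring
    convert h1 using 1
    push_cast
    ring
  have hint := intervalIntegral.integral_eq_sub_of_hasDerivAt (a := (-1:ℝ)) (b := 1)
    (f := fun t : ℝ => t * (1 - t ^ 2) ^ (l + 1)) (f' := fun t => (1 - t ^ 2) ^ l - (2 * l + 3) * (t ^ 2 * (1 - t ^ 2) ^ l))
    (fun x _ => hd x)
    (((contJ0 l).sub (continuous_const.mul ((continuous_pow 2).mul (contJ0 l)))).intervalIntegrable _ _)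
  simp only [one_pow, neg_one_sq] at hint
  norm_num at hint
  have hsplit : ∫ t in (-1:ℝ)..1, ((1 - t ^ 2) ^ l - (2 * (l:ℝ) + 3) * (t ^ 2 * (1 - t ^ 2) ^ l))
      = J0 l - (2 * l + 3) * J2 l := by
    unfold J0 J2
    rw [intervalIntegral.integral_sub ((contJ0 l).intervalIntegrable _ _)
      (g := fun t => (2 * (l:ℝ) + 3) * (t ^ 2 * (1 - t ^ 2) ^ l)) ((continuous_const.mul ((continuous_pow 2).mul (contJ0 l))).intervalIntegrable _ _),
      intervalIntegral.integral_const_mul]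
  rw [hsplit] at hint
  have h3 : (2 * (l:ℝ) + 3) ≠ 0 := by positivity
  field_simp
  linarith

lemma INT (l k : ℕ) (q : Polynomial ℝ) (hq : q.natDegree ≤ k + 2) :
    ∫ t in (-1:ℝ)..1, (1 - t ^ 2) ^ l * (derivative^[k] q).eval t
    = ((k.factorial : ℝ) * q.coeff k) * J0 l
      + (((2 + k).descFactorial k : ℝ) * q.coeff (2 + k)) * J2 l := by
  set q' := derivative^[k] q with hq'
  have hdeg : q'.natDegree < 3 := by
    have h1 := Polynomial.natDegree_iterate_derivative q k
    rw [← hq'] at h1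
    omega
  have heval : ∀ t : ℝ, q'.eval t = q'.coeff 0 + q'.coeff 1 * t + q'.coeff 2 * t ^ 2 := by
    intro t
    rw [Polynomial.eval_eq_sum_range' hdeg, Finset.sum_range_succ, Finset.sum_range_succ,
      Finset.sum_range_one]
    ring
  have hsplit : ∫ t in (-1:ℝ)..1, (1 - t ^ 2) ^ l * q'.eval t
      = q'.coeff 0 * J0 l + q'.coeff 1 * J1 l + q'.coeff 2 * J2 l := by
    have hfun : (fun t : ℝ => (1 - t ^ 2) ^ l * q'.eval t)
        = fun t : ℝ => q'.coeff 0 * (1 - t ^ 2) ^ l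
            + (q'.coeff 1 * (t * (1 - t ^ 2) ^ l) + q'.coeff 2 * (t ^ 2 * (1 - t ^ 2) ^ l)) := by
      funext t
      rw [heval t]
      ring
    rw [hfun]
    rw [intervalIntegral.integral_add, intervalIntegral.integral_add,
      intervalIntegral.integral_const_mul, intervalIntegral.integral_const_mul,
      intervalIntegral.integral_const_mul]
    · unfold J0 J1 J2; ring
    · exact (continuous_const.mul (continuous_id.mul (contJ0 l))).intervalIntegrable _ _
    · exact (continuous_const.mul ((continuous_pow 2).mul (contJ0 l))).intervalIntegrable _ _
    · exact (continuous_const.mul (contJ0 l)).intervalIntegrable _ _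
    · exact ((continuous_const.mul (continuous_id.mul (contJ0 l))).add
        (continuous_const.mul ((continuous_pow 2).mul (contJ0 l)))).intervalIntegrable _ _
  rw [hsplit, J1_zero]
  have c0 : q'.coeff 0 = (k.factorial : ℝ) * q.coeff k := by
    rw [hq', Polynomial.coeff_iterate_derivative, nsmul_eq_mul]
    simp [Nat.descFactorial_self]
  have c2 : q'.coeff 2 = ((2 + k).descFactorial k : ℝ) * q.coeff (2 + k) := by
    rw [hq', Polynomial.coeff_iterate_derivative, nsmul_eq_mul]
  rw [c0, c2]
  ring

lemma v_coeff_zero {m i : ℕ} (h : i % 2 = 1 ∨ 2 * m < i) :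
    ((1 - X ^ 2 : Polynomial ℝ) ^ m).coeff i = 0 := by
  rw [u_coeff]
  apply if_neg
  omega

lemma v_coeff_even (m i : ℕ) (hi : i ≤ m) :
    ((1 - X ^ 2 : Polynomial ℝ) ^ m).coeff (2 * i) = (-1 : ℝ) ^ i * (m.choose i) := by
  rw [u_coeff, if_pos (by omega)]
  have h : 2 * i / 2 = i := by omega
  rw [h]

lemma P_coeff (l m j : ℕ) :
    ((derivative^[m + l] ((1 - X ^ 2 : Polynomial ℝ) ^ l))).coeff j
    = ((j + (m + l)).descFactorial (m + l) : ℝ) * ((1 - X ^ 2 : Polynomial ℝ) ^ l).coeff (j + (m + l)) := by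
  rw [Polynomial.coeff_iterate_derivative, nsmul_eq_mul]

lemma P_coeff_zero {l m j : ℕ} (hm : m ≤ l) (h : l < m + j) :
    ((derivative^[m + l] ((1 - X ^ 2 : Polynomial ℝ) ^ l))).coeff j = 0 := by
  rw [P_coeff, u_coeff, if_neg (by omega), mul_zero]

lemma term_zero {l m i j : ℕ} (hm : m ≤ l) (h : i % 2 = 1 ∨ 2 * m < i ∨ l < m + j) :
    ((1 - X ^ 2 : Polynomial ℝ) ^ m).coeff i
      * ((derivative^[m + l] ((1 - X ^ 2 : Polynomial ℝ) ^ l))).coeff j = 0 := by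
  rcases h with h | h | h
  · rw [v_coeff_zero (Or.inl h), zero_mul]
  · rw [v_coeff_zero (Or.inr h), zero_mul]
  · rw [P_coeff_zero hm h, mul_zero]

lemma coeff_A {l m : ℕ} (hm : m ≤ l) :
    (((1 - X ^ 2 : Polynomial ℝ) ^ m) * (derivative^[m + l] ((1 - X ^ 2 : Polynomial ℝ) ^ l))).coeff (m + l)
    = (-1 : ℝ) ^ (m + l) * ((2 * l).descFactorial (m + l) : ℝ) := by
  rw [Polynomial.coeff_mul]
  rw [Finset.sum_eq_single_of_mem (2 * m, l - m)]
  · rw [v_coeff_even m m le_rfl, Nat.choose_self]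
    rw [P_coeff]
    have h1 : l - m + (m + l) = 2 * l := by omega
    rw [h1, u_coeff, if_pos (by omega)]
    have h2 : 2 * l / 2 = l := by omega
    rw [h2, Nat.choose_self]
    push_cast
    rw [mul_one, mul_one, ← mul_assoc, mul_comm ((-1:ℝ)^m), mul_assoc, ← pow_add, mul_comm]
  · rw [Finset.HasAntidiagonal.mem_antidiagonal]
    omega
  · intro p hp hne
    obtain ⟨i, j⟩ := p
    rw [Finset.HasAntidiagonal.mem_antidiagonal] at hp
    apply term_zero hm
    by_contra hcon
    push_neg at hcon
    exact hne (by simp only [Prod.mk.injEq]; omega)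

lemma negpow_pred {a : ℕ} (ha : 1 ≤ a) : (-1 : ℝ) ^ (a - 1) = -(-1 : ℝ) ^ a := by
  obtain ⟨b, rfl⟩ : ∃ b, a = b + 1 := ⟨a - 1, by omega⟩
  simp [pow_succ]

lemma choose_pred (m : ℕ) (hm : 1 ≤ m) : m.choose (m - 1) = m := by
  obtain ⟨b, rfl⟩ : ∃ b, m = b + 1 := ⟨m - 1, by omega⟩
  simp [Nat.choose_succ_self_right]


lemma u_coeff_sub (l : ℕ) (hl : 1 ≤ l) :
    ((1 - X ^ 2 : Polynomial ℝ) ^ l).coeff (2 * l - 2) = -(-1 : ℝ) ^ l * l := by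
  rw [u_coeff, if_pos (by omega)]
  have h1 : (2 * l - 2) / 2 = l - 1 := by omega
  rw [h1, choose_pred l hl, negpow_pred hl]

lemma coeff_C {l m : ℕ} (hl : 1 ≤ l) (hm : m ≤ l) :
    ((((1 - X ^ 2 : Polynomial ℝ) ^ m) * (derivative^[m + l] ((1 - X ^ 2 : Polynomial ℝ) ^ l)))
      * X ^ 2).coeff (m + l)
    = -(-1 : ℝ) ^ (m + l) * ((l : ℝ) * ((2 * l - 2).descFactorial (m + l) : ℕ)
        + (m : ℝ) * ((2 * l).descFactorial (m + l) : ℕ)) := by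
  rw [Polynomial.coeff_mul_X_pow']
  by_cases hml : 2 ≤ m + l
  · rw [if_pos hml]
    by_cases hm0 : m = 0
    · subst hm0
      rw [pow_zero, one_mul, P_coeff]
      simp only [Nat.zero_add]
      have h1 : l - 2 + l = 2 * l - 2 := by omega
      rw [h1, u_coeff_sub l hl]
      push_cast
      ring
    · have hm1 : 1 ≤ m := by omega
      rw [Polynomial.coeff_mul]
      by_cases hlm : m + 2 ≤ l
      · -- two terms
        have hmem1 : ((2 * m, l - m - 2) : ℕ × ℕ) ∈ Finset.HasAntidiagonal.antidiagonal (m + l - 2) := by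
          rw [Finset.HasAntidiagonal.mem_antidiagonal]; omega
        rw [← Finset.add_sum_erase _ _ hmem1]
        have hmem2 : ((2 * (m - 1), l - m) : ℕ × ℕ)
            ∈ (Finset.HasAntidiagonal.antidiagonal (m + l - 2)).erase (2 * m, l - m - 2) := by
          rw [Finset.mem_erase, Finset.HasAntidiagonal.mem_antidiagonal]
          constructor
          · simp only [ne_eq, Prod.mk.injEq]; omega
          · omega
        rw [Finset.sum_eq_single_of_mem _ hmem2]
        · rw [v_coeff_even m m le_rfl, v_coeff_even m (m - 1) (by omega), Nat.choose_self,
            choose_pred m hm1, P_coeff, P_coeff]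
          have e1 : l - m - 2 + (m + l) = 2 * l - 2 := by omega
          have e2 : l - m + (m + l) = 2 * l := by omega
          rw [e1, e2, u_coeff_sub l hl, u_coeff, if_pos (by omega)]
          have e3 : 2 * l / 2 = l := by omega
          rw [e3, Nat.choose_self, negpow_pred hm1]
          push_cast
          ring
        · intro p hp hne
          obtain ⟨i, j⟩ := p
          rw [Finset.mem_erase, Finset.HasAntidiagonal.mem_antidiagonal] at hp
          have hpne := hp.1
          apply term_zero hm
          by_contra hcon
          push_neg at hcon
          rcases Nat.lt_or_ge i (2 * m) with hi | hi
          · exact hne (by simp only [Prod.mk.injEq]; omega)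
          · exact hpne (by simp only [Prod.mk.injEq]; omega)
      · -- single term; first descFactorial vanishes
        have hdf : (2 * l - 2).descFactorial (m + l) = 0 :=
          Nat.descFactorial_eq_zero_iff_lt.mpr (by omega)
        rw [hdf]
        rw [Finset.sum_eq_single_of_mem ((2 * (m - 1), l - m))]
        · rw [v_coeff_even m (m - 1) (by omega), choose_pred m hm1, P_coeff]
          have e2 : l - m + (m + l) = 2 * l := by omega
          rw [e2, u_coeff, if_pos (by omega)]
          have e3 : 2 * l / 2 = l := by omega
          rw [e3, Nat.choose_self, negpow_pred hm1]
          push_cast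
          ring
        · rw [Finset.HasAntidiagonal.mem_antidiagonal]; omega
        · intro p hp hne
          obtain ⟨i, j⟩ := p
          rw [Finset.HasAntidiagonal.mem_antidiagonal] at hp
          apply term_zero hm
          by_contra hcon
          push_neg at hcon
          exact hne (by simp only [Prod.mk.injEq]; omega)
  · rw [if_neg hml]
    have h1 : m = 0 ∧ l = 1 := by omega
    obtain ⟨rfl, rfl⟩ := h1
    norm_num

/-- The unnormalized associated Legendre function
`Q_l^m(t) = (1-t²)^{m/2} (d/dt)^{m+l} (1-t²)^l`. -/
noncomputable def assocLegendreQ (l m : ℕ) (t : ℝ) : ℝ :=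
  (Real.sqrt (1 - t ^ 2)) ^ m * iteratedDeriv (m + l) (fun s : ℝ => (1 - s ^ 2) ^ l) t

theorem stmt0 (l m : ℕ) (hl : 1 ≤ l) (hm : m ≤ l) :
    (∫ t in (-1:ℝ)..1, t ^ 2 * (assocLegendreQ l m t) ^ 2)
      / (∫ t in (-1:ℝ)..1, (assocLegendreQ l m t) ^ 2)
    = (2 * (l:ℝ) ^ 2 - 2 * (m:ℝ) ^ 2 + 2 * l - 1)
      / ((2 * (l:ℝ) + 3) * (2 * (l:ℝ) - 1)) := by
  classical
  set k := m + l with hk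
  set u : Polynomial ℝ := (1 - X ^ 2) ^ l with hu
  set P : Polynomial ℝ := derivative^[k] u with hP
  set g : Polynomial ℝ := (1 - X ^ 2) ^ m * P with hg
  -- rewrite assocLegendreQ via polynomials
  have hfun : (fun s : ℝ => (1 - s ^ 2) ^ l) = fun s : ℝ => u.eval s := by
    funext s; simp [hu]
  have hQ : ∀ t ∈ Set.uIcc (-1:ℝ) 1, (assocLegendreQ l m t) ^ 2
      = (derivative^[k] u).eval t * g.eval t := by
    intro t ht
    rw [Set.uIcc_of_le (by norm_num : (-1:ℝ) ≤ 1), Set.mem_Icc] at ht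
    have h1 : (0:ℝ) ≤ 1 - t ^ 2 := by nlinarith [ht.1, ht.2]
    unfold assocLegendreQ
    rw [hfun, iteratedDeriv_polyeval]
    have h2 : (Real.sqrt (1 - t ^ 2) ^ m) ^ 2 = (1 - t ^ 2) ^ m := by
      rw [← pow_mul, mul_comm m 2, pow_mul, Real.sq_sqrt h1]
    rw [mul_pow, h2, hg]
    simp only [Polynomial.eval_mul, Polynomial.eval_pow, Polynomial.eval_sub,
      Polynomial.eval_one, Polynomial.eval_X, ← hP]
    ring
  have hQ2 : ∀ t ∈ Set.uIcc (-1:ℝ) 1, t ^ 2 * (assocLegendreQ l m t) ^ 2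
      = (derivative^[k] u).eval t * (g * X ^ 2).eval t := by
    intro t ht
    rw [hQ t ht]
    simp only [Polynomial.eval_mul, Polynomial.eval_pow, Polynomial.eval_X]
    ring
  rw [intervalIntegral.integral_congr (fun t ht => hQ2 t ht),
    intervalIntegral.integral_congr (fun t ht => hQ t ht)]
  -- boundary conditions
  have hbound : ∀ h2 : Polynomial ℝ, ∀ j < k, ∀ t : ℝ, 1 - t ^ 2 = 0 →
      (derivative^[k - 1 - j] u).eval t
        * (derivative^[j] ((1 - X ^ 2) ^ m * h2)).eval t = 0 := by
    intro h2 j hj t ht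
    rcases lt_or_ge j m with hjm | hjm
    · rw [eval_deriv_zero h2 hjm ht, mul_zero]
    · have hlt : k - 1 - j < l := by omega
      have hu1 : u = (1 - X ^ 2) ^ l * 1 := by rw [mul_one]
      rw [hu1, eval_deriv_zero 1 hlt ht, zero_mul]
  -- apply iterated integration by parts
  have hgX : g * X ^ 2 = (1 - X ^ 2) ^ m * (P * X ^ 2) := by rw [hg]; ring
  have ibpN := ibp_iter k u (g * X ^ 2) (by
    intro j hj t ht
    rw [hgX]
    exact hbound (P * X ^ 2) j hj t ht)
  have ibpD := ibp_iter k u g (fun j hj t ht => hbound P j hj t ht)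
  rw [ibpN, ibpD]
  -- convert u.eval to explicit form and apply INT
  have huev : ∀ q : Polynomial ℝ, (∫ t in (-1:ℝ)..1, u.eval t * (derivative^[k] q).eval t)
      = ∫ t in (-1:ℝ)..1, (1 - t ^ 2) ^ l * (derivative^[k] q).eval t := by
    intro q
    apply intervalIntegral.integral_congr
    intro t _
    simp [hu]
  -- degree bounds
  have hdegu : u.natDegree ≤ 2 * l := u_natDegree l
  have hdegP : P.natDegree ≤ l - m := by
    have h1 := Polynomial.natDegree_iterate_derivative u k
    rw [← hP] at h1
    omega
  have hdegg : g.natDegree ≤ k := by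
    refine le_trans (Polynomial.natDegree_mul_le) ?_
    have h1 := u_natDegree m
    omega
  have hdeggX : (g * X ^ 2).natDegree ≤ k + 2 := by
    refine le_trans (Polynomial.natDegree_mul_le) ?_
    have h1 : (X ^ 2 : Polynomial ℝ).natDegree ≤ 2 := by
      simpa using Polynomial.natDegree_X_pow_le (R := ℝ) 2
    omega
  rw [huev, huev, INT l k g (by omega), INT l k (g * X ^ 2) hdeggX]
  -- coefficient values
  have hA : g.coeff k = (-1 : ℝ) ^ k * ((2 * l).descFactorial k : ℝ) := by
    rw [hg, hP, hu, hk]; exact coeff_A hm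
  have hA2 : g.coeff (2 + k) = 0 :=
    Polynomial.coeff_eq_zero_of_natDegree_lt (by omega)
  have hC : (g * X ^ 2).coeff k = -(-1 : ℝ) ^ k * ((l : ℝ) * ((2 * l - 2).descFactorial k : ℕ)
      + (m : ℝ) * ((2 * l).descFactorial k : ℕ)) := by
    rw [hg, hP, hu, hk]; exact coeff_C hl hm
  have hB : (g * X ^ 2).coeff (2 + k) = g.coeff k := by
    rw [show 2 + k = k + 2 from by omega, Polynomial.coeff_mul_X_pow]
  rw [hA, hA2, hB, hA, hC]
  -- now pure arithmetic
  set D : ℕ := (2 * l).descFactorial k with hD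
  set D2 : ℕ := (2 * l - 2).descFactorial k with hD2
  set dF : ℕ := (2 + k).descFactorial k with hdF
  have hDpos : (0:ℝ) < (D : ℝ) := by
    have : D ≠ 0 := by
      rw [hD, ne_eq, Nat.descFactorial_eq_zero_iff_lt]
      omega
    positivity
  have hJ := J0_pos l
  have hKpos : (0:ℝ) < (k.factorial : ℝ) := by positivity
  have key : (l - m - 1) * ((l - m) * D) = 2 * l * ((2 * l - 1) * D2) := by
    have h1 : (2 * l).descFactorial (k + 2) = (l - m - 1) * ((l - m) * D) := by
      rw [Nat.descFactorial_succ, Nat.descFactorial_succ, ← hD]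
      have e1 : 2 * l - (k + 1) = l - m - 1 := by omega
      have e2 : 2 * l - k = l - m := by omega
      rw [e1, e2]
    have h2 : (2 * l).descFactorial (k + 2) = 2 * l * ((2 * l - 1) * D2) := by
      have e : 2 * l = (2 * l - 2) + 1 + 1 := by omega
      rw [e, Nat.succ_descFactorial_succ, Nat.succ_descFactorial_succ, ← hD2]
      have e1 : 2 * l - 2 + 1 + 1 = 2 * l := by omega
      have e2 : 2 * l - 2 + 1 = 2 * l - 1 := by omega
      rw [e1, e2]
    omega
  have keyR : ((l:ℝ) - m - 1) * (((l:ℝ) - m) * D) = 2 * l * ((2 * l - 1) * D2) := by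
    by_cases hml : m = l
    · subst hml
      have hD2z : D2 = 0 := by
        rw [hD2, Nat.descFactorial_eq_zero_iff_lt]
        omega
      rw [hD2z]
      push_cast
      ring
    · have h1 : 1 ≤ l - m := by omega
      have c1 : ((l - m : ℕ) : ℝ) = (l:ℝ) - m := by
        push_cast [Nat.cast_sub hm]; ring
      have c2 : ((l - m - 1 : ℕ) : ℝ) = (l:ℝ) - m - 1 := by
        have h3 : l - m - 1 = l - (m + 1) := by omega
        rw [h3]
        push_cast [Nat.cast_sub (show m + 1 ≤ l by omega)]
        ring
      calc ((l:ℝ) - m - 1) * (((l:ℝ) - m) * D)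
          = ((l - m - 1 : ℕ) : ℝ) * (((l - m : ℕ) : ℝ) * D) := by rw [c1, c2]
        _ = (((l - m - 1) * ((l - m) * D) : ℕ) : ℝ) := by push_cast; ring
        _ = ((2 * l * ((2 * l - 1) * D2) : ℕ) : ℝ) := by rw [key]
        _ = 2 * l * ((2 * l - 1) * (D2:ℝ)) := by
            push_cast [Nat.cast_sub (show 1 ≤ 2 * l by omega)]
            ring
  have keydF : 2 * dF = (k + 2) * ((k + 1) * k.factorial) := by
    have h1 : (k + 2).factorial = 2 * dF := by
      rw [← Nat.descFactorial_self, Nat.descFactorial_succ, Nat.descFactorial_succ]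
      have e1 : k + 2 - (k + 1) = 1 := by omega
      have e2 : k + 2 - k = 2 := by omega
      rw [e1, e2, hdF]
      have e3 : 2 + k = k + 2 := by omega
      rw [e3]
      ring
    rw [← h1, Nat.factorial_succ, Nat.factorial_succ]
  have keydFR : 2 * (dF : ℝ) = (((m:ℝ) + l) + 2) * ((((m:ℝ) + l) + 1) * (k.factorial : ℝ)) := by
    have h1 : ((2 * dF : ℕ) : ℝ) = (((k + 2) * ((k + 1) * k.factorial) : ℕ) : ℝ) := by
      rw [keydF]
    push_cast at h1
    rw [hk] at h1
    push_cast at h1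
    linarith
  have hJ2 : (2 * (l:ℝ) + 3) * J2 l = J0 l := by
    rw [J2_eq]
    field_simp
  have hs : ((-1:ℝ)^k) ≠ 0 := pow_ne_zero _ (by norm_num)
  have hss : ∀ x y : ℝ, ((-1:ℝ)^k * x) / ((-1:ℝ)^k * y) = x / y := fun x y =>
    mul_div_mul_left x y hs
  rw [hss]
  have h2l1 : (1:ℝ) ≤ (l:ℝ) := by exact_mod_cast hl
  rw [div_eq_div_iff]
  · linear_combination (((-1:ℝ)^k) * (((k.factorial:ℝ) * J0 l * (2*(l:ℝ)+3))/2)) * keyR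
      + (((-1:ℝ)^k) * ((D:ℝ) * J0 l * (2*(l:ℝ)-1))/2) * keydFR
      + (((-1:ℝ)^k) * (dF:ℝ) * (D:ℝ) * (2*(l:ℝ)-1)) * hJ2
  · simp only [mul_zero, zero_mul, add_zero]
    apply mul_ne_zero
    apply mul_ne_zero (ne_of_gt hKpos)
    · exact mul_ne_zero hs (ne_of_gt hDpos)
    · exact ne_of_gt hJ
  · nlinarith
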